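/- Let X be a finite metric space with distance d, let s : Finset X → ℝ be a non-negative monotone submodular set function, λ > 0, n ≥ 1, α ∈ (0,1], and let ã := (1/2)·s + λ·div. Let x₀, …, x_{n−1} be pairwise distinct elements of X forming an α-approximate greedy sequence for the set function ã, with partial sets B_i and output B_n (so |B_i| = i). Then for every B* ⊆ X with |B*| = n, s(B_n) + λ·div(B_n) ≥ (α/2)·(s(B*) + λ·div(B*)). -/

import Mathlib

open Finset

set_option linter.unusedSectionVars false
set_option linter.unusedVariables false
set_option maxHeartbeats 1000000

/-- `d(A,B) = Σ_{x∈A} Σ_{x'∈B} d(x,x')`. -/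
noncomputable def setDist {X : Type*} [MetricSpace X] (A B : Finset X) : ℝ :=
  ∑ x ∈ A, ∑ x' ∈ B, dist x x'

/-- Sum-dispersion `div(B) = (1/2)·d(B,B)`. -/
noncomputable def sumDisp {X : Type*} [MetricSpace X] (B : Finset X) : ℝ :=
  (1 / 2) * setDist B B

/-- Marginal gain `Δ_a(x ∣ B) = a(B ∪ {x}) − a(B)`. -/
noncomputable def margGain {X : Type*} [DecidableEq X] (a : Finset X → ℝ) (x : X)
    (B : Finset X) : ℝ :=
  a (insert x B) - a B

/-- The partial set `B_i = {x₀, …, x_{i−1}}` of a sequence `xs`. -/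
def partialSet {X : Type*} [DecidableEq X] {n : ℕ} (xs : Fin n → X) (i : ℕ) : Finset X :=
  (Finset.univ.filter (fun j : Fin n => (j : ℕ) < i)).image xs

section auxlem
variable {X : Type*} [MetricSpace X] [DecidableEq X]

lemma setDist_nonneg' (A B : Finset X) : 0 ≤ setDist A B :=
  Finset.sum_nonneg fun _ _ => Finset.sum_nonneg fun _ _ => dist_nonneg

lemma setDist_comm' (A B : Finset X) : setDist A B = setDist B A := by
  rw [setDist, setDist, Finset.sum_comm]
  exact Finset.sum_congr rfl fun b _ => Finset.sum_congr rfl fun a _ => dist_comm a b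

lemma setDist_union_left' {A B : Finset X} (h : Disjoint A B) (C : Finset X) :
    setDist (A ∪ B) C = setDist A C + setDist B C :=
  Finset.sum_union h

lemma setDist_union_right' (A : Finset X) {B C : Finset X} (h : Disjoint B C) :
    setDist A (B ∪ C) = setDist A B + setDist A C := by
  unfold setDist
  rw [← Finset.sum_add_distrib]
  exact Finset.sum_congr rfl fun x _ => Finset.sum_union h

lemma setDist_singleton' (x : X) (B : Finset X) : setDist {x} B = ∑ b ∈ B, dist x b := by
  simp [setDist]

lemma sumDisp_nonneg' (B : Finset X) : 0 ≤ sumDisp B := by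
  have := setDist_nonneg' B B
  unfold sumDisp; linarith

lemma sumDisp_empty' : sumDisp (∅ : Finset X) = 0 := by simp [sumDisp, setDist]

lemma sumDisp_singleton' (x : X) : sumDisp ({x} : Finset X) = 0 := by
  simp [sumDisp, setDist]

lemma sumDisp_union' {A B : Finset X} (h : Disjoint A B) :
    sumDisp (A ∪ B) = sumDisp A + setDist A B + sumDisp B := by
  unfold sumDisp
  rw [setDist_union_left' h, setDist_union_right' A h, setDist_union_right' B h,
    setDist_comm' B A]
  ring

lemma sumDisp_insert' {x : X} {B : Finset X} (h : x ∉ B) :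
    sumDisp (insert x B) = sumDisp B + setDist {x} B := by
  rw [Finset.insert_eq, sumDisp_union' (Finset.disjoint_singleton_left.2 h),
    sumDisp_singleton']
  ring

lemma sumDisp_card_one' {A : Finset X} (h : A.card = 1) : sumDisp A = 0 := by
  obtain ⟨x, rfl⟩ := Finset.card_eq_one.1 h
  exact sumDisp_singleton' x

lemma card_mul_sumDisp_le' (U V : Finset X) :
    (V.card : ℝ) * sumDisp U ≤ ((U.card : ℝ) - 1) * setDist U V := by
  rcases U.eq_empty_or_nonempty with rfl | hU
  · simp [sumDisp, setDist]
  have hc1 : 1 ≤ U.card := Finset.card_pos.2 hU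
  have key : ∀ v ∈ V, setDist U U ≤ (2 * ((U.card : ℝ) - 1)) * ∑ x ∈ U, dist x v := by
    intro v _
    have hx : ∀ x ∈ U, ∑ y ∈ U, dist x y
        ≤ ((U.card : ℝ) - 1) * dist x v + (∑ y ∈ U, dist v y) - dist v x := by
      intro x hxU
      have e1 : ∑ y ∈ U, dist x y = ∑ y ∈ U.erase x, dist x y := by
        rw [← Finset.add_sum_erase U _ hxU]; simp
      have e2 : ∑ y ∈ U.erase x, dist x y ≤ ∑ y ∈ U.erase x, (dist x v + dist v y) :=
        Finset.sum_le_sum fun y _ => dist_triangle x v y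
      have e3 : ∑ y ∈ U.erase x, (dist x v + dist v y)
          = ((U.card : ℝ) - 1) * dist x v + ((∑ y ∈ U, dist v y) - dist v x) := by
        rw [Finset.sum_add_distrib, Finset.sum_const, Finset.card_erase_of_mem hxU,
          Finset.sum_erase_eq_sub hxU, nsmul_eq_mul, Nat.cast_sub hc1]
        push_cast
        ring
      linarith [e1, e2, e3]
    have := Finset.sum_le_sum hx
    have hsum : ∑ x ∈ U, (((U.card : ℝ) - 1) * dist x v + (∑ y ∈ U, dist v y) - dist v x)
        = 2 * ((U.card : ℝ) - 1) * ∑ x ∈ U, dist x v := by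
      rw [Finset.sum_sub_distrib, Finset.sum_add_distrib, ← Finset.mul_sum,
        Finset.sum_const, nsmul_eq_mul]
      have h1 : ∑ x ∈ U, dist v x = ∑ x ∈ U, dist x v :=
        Finset.sum_congr rfl fun x _ => dist_comm v x
      rw [h1]
      ring
    calc setDist U U = ∑ x ∈ U, ∑ y ∈ U, dist x y := rfl
      _ ≤ _ := by rw [← hsum]; exact this
  have h2 : (V.card : ℝ) * setDist U U ≤ 2 * ((U.card : ℝ) - 1) * setDist U V := by
    have := Finset.sum_le_sum key
    rw [Finset.sum_const, nsmul_eq_mul] at this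
    have hswap : ∑ v ∈ V, ∑ x ∈ U, dist x v = setDist U V := by
      rw [setDist, Finset.sum_comm]
    rw [← Finset.mul_sum, hswap] at this
    exact this
  unfold sumDisp
  linarith

end auxlem



lemma scalar_key (n i a c dAC dE vA vC : ℝ)
    (hn : 2 ≤ n) (hi0 : 0 ≤ i) (hin : i + 1 ≤ n) (hc0 : 0 ≤ c) (hci : c ≤ i)
    (hac : a + c = n) (ha1 : 1 ≤ a)
    (hdAC : 0 ≤ dAC) (hdE : 0 ≤ dE) (hvA : 0 ≤ vA) (hvC : 0 ≤ vC)
    (f1 : a * vC ≤ (c - 1) * dAC) (f2 : c * vA ≤ (a - 1) * dAC)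
    (f3 : (i - c) * vA ≤ (a - 1) * dE) :
    i * a * (vA + dAC + vC) ≤ n * (n - 1) * (dAC + dE) := by
  have hcn : c = n - a := by linarith
  subst hcn
  have han : a ≤ n := by linarith
  rcases eq_or_lt_of_le ha1 with h1 | ha1'
  · -- a = 1
    have ha : a = 1 := h1.symm
    subst ha
    have hvA0 : vA = 0 := by nlinarith [f2]
    have h2 : i * vC ≤ i * ((n - 1 - 1) * dAC) :=
      mul_le_mul_of_nonneg_left (by linarith [f1]) hi0
    have t1 : 0 ≤ (n - i) * (n - 1) * dAC :=
      mul_nonneg (mul_nonneg (by linarith) (by linarith)) hdAC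
    have t2 : 0 ≤ n * (n - 1) * dE :=
      mul_nonneg (mul_nonneg (by linarith) (by linarith)) hdE
    nlinarith [h2, t1, t2]
  · -- a > 1
    rcases le_or_gt (i * (n - 1)) ((n - a) * (n - 1) + a * (a - 1)) with hD | hD
    · -- case 1
      have c1 : 0 ≤ (i * (n - 1) * (a - 1)) * ((n - a - 1) * dAC - a * vC) :=
        mul_nonneg (mul_nonneg (mul_nonneg hi0 (by linarith)) (by linarith))
          (by linarith [f1])
      have c2 : 0 ≤ (i * (n - 1) * (n - 1)) * ((a - 1) * dE - (i - (n - a)) * vA) :=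
        mul_nonneg (mul_nonneg (mul_nonneg hi0 (by linarith)) (by linarith))
          (by linarith [f3])
      have c3 : 0 ≤ (((n - a) * (n - 1) + a * (a - 1) - i * (n - 1)) * (n - 1)) *
          ((a - 1) * (dAC + dE) - i * vA) :=
        mul_nonneg (mul_nonneg (by linarith) (by linarith)) (by linarith [f2, f3])
      have hG : 0 ≤ ((a - 1) * (n - 1)) *
          (((n - a) * (n - 1) + a * (a - 1)) * (dAC + dE) - i * a * (vA + dAC + vC)) := by
        linarith [c1, c2, c3]
      have hpos : 0 < (a - 1) * (n - 1) := mul_pos (by linarith) (by linarith)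
      have hG' : 0 ≤ ((n - a) * (n - 1) + a * (a - 1)) * (dAC + dE)
          - i * a * (vA + dAC + vC) := (mul_nonneg_iff_of_pos_left hpos).mp hG
      have hDle : (n - a) * (n - 1) + a * (a - 1) ≤ n * (n - 1) := by
        nlinarith [mul_nonneg (by linarith : (0:ℝ) ≤ a) (by linarith : (0:ℝ) ≤ n - a)]
      have hmm := mul_le_mul_of_nonneg_right hDle (by linarith : (0:ℝ) ≤ dAC + dE)
      linarith [hG', hmm]
    · -- case 2
      have hp : a * (a - 1) * vA ≤ (i - (n - a)) * (n - 1) * vA :=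
        mul_le_mul_of_nonneg_right (by nlinarith) hvA
      have hq : (n - 1) * ((i - (n - a)) * vA) ≤ (n - 1) * ((a - 1) * dE) :=
        mul_le_mul_of_nonneg_left f3 (by linarith)
      have h4 : a * (a - 1) * vA ≤ (n - 1) * (a - 1) * dE := by linarith [hp, hq]
      have h5 : a * (dAC + vC) ≤ (n - 1) * dAC := by linarith [f1]
      have h5' := mul_le_mul_of_nonneg_left h5 (by linarith : (0:ℝ) ≤ a - 1)
      have h6 : (a - 1) * (a * (vA + dAC + vC)) ≤ (a - 1) * ((n - 1) * (dAC + dE)) := by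
        linarith [h4, h5']
      have h7 : a * (vA + dAC + vC) ≤ (n - 1) * (dAC + dE) :=
        le_of_mul_le_mul_left h6 (by linarith)
      have ht := mul_le_mul_of_nonneg_left h7 hi0
      have ht2 : i * ((n - 1) * (dAC + dE)) ≤ n * ((n - 1) * (dAC + dE)) :=
        mul_le_mul_of_nonneg_right (by linarith)
          (mul_nonneg (by linarith) (by linarith))
      linarith [ht, ht2]

section part2
variable {X : Type*} [DecidableEq X]

lemma s_union_mono (s : Finset X → ℝ) (hs_mono : ∀ (B : Finset X) (x : X), 0 ≤ margGain s x B)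
    (T : Finset X) : ∀ W : Finset X, s T ≤ s (T ∪ W) := by
  intro W
  induction W using Finset.induction_on with
  | empty => simp
  | @insert a W' ha ih =>
    have h1 : T ∪ insert a W' = insert a (T ∪ W') := Finset.union_insert a T W'
    have h2 := hs_mono (T ∪ W') a
    unfold margGain at h2
    rw [h1]
    linarith

lemma s_mono_subset (s : Finset X → ℝ) (hs_mono : ∀ (B : Finset X) (x : X), 0 ≤ margGain s x B)
    {T U : Finset X} (h : T ⊆ U) : s T ≤ s U := by
  have := s_union_mono s hs_mono T U
  rwa [Finset.union_eq_right.2 h] at this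

lemma submod_sum (s : Finset X → ℝ)
    (hs_submod : ∀ B' B : Finset X, B' ⊆ B → ∀ x : X, x ∉ B →
      margGain s x B ≤ margGain s x B')
    (S : Finset X) : ∀ A : Finset X, Disjoint S A →
      s (S ∪ A) ≤ s S + ∑ x ∈ A, margGain s x S := by
  intro A
  induction A using Finset.induction_on with
  | empty => simp
  | @insert a A' ha ih =>
    intro hd
    have hd' : Disjoint S A' := hd.mono_right (Finset.subset_insert a A')
    have haS : a ∉ S := Finset.disjoint_right.1 hd (Finset.mem_insert_self a A')
    have haSA : a ∉ S ∪ A' := by simp [haS, ha]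
    have h1 : S ∪ insert a A' = insert a (S ∪ A') := Finset.union_insert a S A'
    have h2 : margGain s a (S ∪ A') ≤ margGain s a S :=
      hs_submod S (S ∪ A') Finset.subset_union_left a haSA
    have h3 := ih hd'
    have h4 : ∑ x ∈ insert a A', margGain s x S
        = margGain s a S + ∑ x ∈ A', margGain s x S := Finset.sum_insert ha
    have h5 : s (insert a (S ∪ A')) = s (S ∪ A') + margGain s a (S ∪ A') := by
      unfold margGain; ring
    rw [h1, h5, h4]
    linarith

variable {n : ℕ}

lemma partialSet_zero (xs : Fin n → X) : partialSet xs 0 = ∅ := by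
  simp [partialSet]

lemma partialSet_succ (xs : Fin n → X) (k : ℕ) (hk : k < n) :
    partialSet xs (k + 1) = insert (xs ⟨k, hk⟩) (partialSet xs k) := by
  ext y
  simp only [partialSet, Finset.mem_insert, Finset.mem_image, Finset.mem_filter,
    Finset.mem_univ, true_and]
  constructor
  · rintro ⟨j, hj, rfl⟩
    rcases Nat.lt_succ_iff_lt_or_eq.1 hj with h | h
    · exact Or.inr ⟨j, h, rfl⟩
    · exact Or.inl (by rw [show j = (⟨k, hk⟩ : Fin n) from Fin.ext h])
  · rintro (h | ⟨j, hj, rfl⟩)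
    · exact ⟨⟨k, hk⟩, Nat.lt_succ_self k, h.symm⟩
    · exact ⟨j, Nat.lt_succ_of_lt hj, rfl⟩

lemma xs_not_mem_partialSet {xs : Fin n → X} (hxs : Function.Injective xs)
    (k : ℕ) (hk : k < n) : xs ⟨k, hk⟩ ∉ partialSet xs k := by
  simp only [partialSet, Finset.mem_image, Finset.mem_filter, Finset.mem_univ, true_and]
  rintro ⟨j, hj, hje⟩
  have := hxs hje
  rw [this] at hj
  exact absurd hj (by simp)

lemma card_partialSet {xs : Fin n → X} (hxs : Function.Injective xs) :
    ∀ k, k ≤ n → (partialSet xs k).card = k := by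
  intro k
  induction k with
  | zero => simp [partialSet_zero]
  | succ m ih =>
    intro hm
    have hmn : m < n := hm
    rw [partialSet_succ xs m hmn,
      Finset.card_insert_of_notMem (xs_not_mem_partialSet hxs m hmn), ih (le_of_lt hmn)]

lemma partialSet_mono (xs : Fin n → X) {k m : ℕ} (h : k ≤ m) :
    partialSet xs k ⊆ partialSet xs m :=
  Finset.image_subset_image (Finset.monotone_filter_right _
    (fun j _ hj => lt_of_lt_of_le hj h))

end part2

/-- diversified-subset-selection guarantee for submodular `s`:
running the α-approximate greedy algorithm on `ã = (1/2)·s + λ·div` returns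
`B_n` with `s(B_n) + λ·div(B_n) ≥ (α/2)·(s(B*) + λ·div(B*))`. -/
theorem approx_greedy_diversified_submodular_bound
    {X : Type*} [Fintype X] [MetricSpace X] [DecidableEq X]
    (s : Finset X → ℝ)
    (hs_nonneg : ∀ B : Finset X, 0 ≤ s B)
    (hs_mono : ∀ (B : Finset X) (x : X), 0 ≤ margGain s x B)
    (hs_submod : ∀ B' B : Finset X, B' ⊆ B → ∀ x : X, x ∉ B →
      margGain s x B ≤ margGain s x B')
    (lam : ℝ) (hlam : 0 < lam)
    (n : ℕ) (hn : 1 ≤ n)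
    (α : ℝ) (hα0 : 0 < α) (hα1 : α ≤ 1)
    (xs : Fin n → X) (hxs : Function.Injective xs)
    (hgreedy : ∀ i : Fin n, ∀ x : X, x ∉ partialSet xs i →
      α * margGain (fun C => (1 / 2) * s C + lam * sumDisp C) x (partialSet xs i) ≤
        margGain (fun C => (1 / 2) * s C + lam * sumDisp C) (xs i) (partialSet xs i)) :
    ∀ Bstar : Finset X, Bstar.card = n →
      (α / 2) * (s Bstar + lam * sumDisp Bstar) ≤
        s (partialSet xs n) + lam * sumDisp (partialSet xs n) := by
  intro O hO
  set φ : Finset X → ℝ := fun C => (1 / 2) * s C + lam * sumDisp C with hφ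
  clear_value φ
  have hmg : ∀ (x : X) (B : Finset X), x ∉ B →
      margGain φ x B = (1 / 2) * margGain s x B + lam * setDist {x} B := by
    intro x B hx
    simp only [margGain, hφ, sumDisp_insert' hx]
    ring
  rcases eq_or_lt_of_le hn with hn1 | hn2
  · -- n = 1
    have hn1' : n = 1 := hn1.symm
    subst hn1'
    obtain ⟨y, rfl⟩ := Finset.card_eq_one.1 hO
    have h01 : (0 : ℕ) < 1 := Nat.zero_lt_one
    have hS1 : partialSet xs 1 = {xs ⟨0, h01⟩} := by
      ext z
      simp only [partialSet, Finset.mem_image, Finset.mem_filter, Finset.mem_univ, true_and,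
        Finset.mem_singleton]
      constructor
      · rintro ⟨j, hj, rfl⟩
        have hj0 : j = ⟨0, h01⟩ := Subsingleton.elim _ _
        rw [hj0]
      · intro h
        exact ⟨⟨0, h01⟩, h01, h.symm⟩
    have hP0 : partialSet xs ((⟨0, h01⟩ : Fin 1) : ℕ) = ∅ := partialSet_zero xs
    have hgy := hgreedy ⟨0, h01⟩ y (by rw [hP0]; exact Finset.notMem_empty y)
    rw [hP0] at hgy
    have e1 : margGain φ y ∅ = (1 / 2) * s {y} - (1 / 2) * s ∅ := by
      simp only [margGain, hφ, Finset.insert_empty, sumDisp_singleton', sumDisp_empty']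
      ring
    have e2 : margGain φ (xs ⟨0, h01⟩) ∅ = (1 / 2) * s {xs ⟨0, h01⟩} - (1 / 2) * s ∅ := by
      simp only [margGain, hφ, Finset.insert_empty, sumDisp_singleton', sumDisp_empty']
      ring
    rw [e1, e2] at hgy
    rw [hS1, sumDisp_singleton', sumDisp_singleton']
    have h3 : 0 ≤ s ∅ := hs_nonneg ∅
    have h4 : 0 ≤ s {y} := hs_nonneg {y}
    have h5 : α * s ∅ ≤ s ∅ := mul_le_of_le_one_left h3 hα1
    linarith [hgy, h5, mul_nonneg hα0.le h4]
  · -- 2 ≤ n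
    have hn2' : 2 ≤ n := hn2
    set P : ℝ := max 0 (s O - s (partialSet xs n)) with hPdef
    clear_value P
    have hP0 : 0 ≤ P := by rw [hPdef]; exact le_max_left _ _
    have hP1 : s O - s (partialSet xs n) ≤ P := by rw [hPdef]; exact le_max_right _ _
    have hNR : (2:ℝ) ≤ (n:ℝ) := by exact_mod_cast hn2'
    -- per-step bound
    have step : ∀ (k : ℕ) (hk : k < n),
        α * (((n:ℝ) - 1) * P / 2) + α * lam * (k:ℝ) * sumDisp O ≤
          (n:ℝ) * ((n:ℝ) - 1) * margGain φ (xs ⟨k, hk⟩) (partialSet xs k) := by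
      intro k hk
      set Sk := partialSet xs k with hSk
      set A := O \ Sk with hA
      set C := O ∩ Sk with hC
      set E := Sk \ O with hE
      have hSkcard : Sk.card = k := card_partialSet hxs k hk.le
      have hAne : A.Nonempty := by
        rw [hA, Finset.sdiff_nonempty]
        intro hsub
        have hcc := Finset.card_le_card hsub
        rw [hO, hSkcard] at hcc
        omega
      have ha1 : 1 ≤ A.card := Finset.card_pos.2 hAne
      have hacn : A.card + C.card = n := by
        rw [hA, hC, Finset.card_sdiff_add_card_inter, hO]
      have hcSk : C.card ≤ k := by
        rw [hC, ← hSkcard]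
        exact Finset.card_le_card Finset.inter_subset_right
      have hEcard : E.card + C.card = k := by
        have h := Finset.card_sdiff_add_card_inter Sk O
        rw [hSkcard, Finset.inter_comm Sk O] at h
        rw [hE, hC]
        exact h
      have hdisjAC : Disjoint A C := by
        rw [hA, hC]; exact Finset.disjoint_sdiff_inter O Sk
      have hOsplit : A ∪ C = O := by
        rw [hA, hC]; exact Finset.sdiff_union_inter O Sk
      have hvO : sumDisp O = sumDisp A + setDist A C + sumDisp C := by
        rw [← hOsplit, sumDisp_union' hdisjAC]
      have hdisjCE : Disjoint C E := by
        rw [hC, hE, Finset.inter_comm]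
        exact (Finset.disjoint_sdiff_inter Sk O).symm
      have hSksplit : C ∪ E = Sk := by
        rw [hC, hE, Finset.inter_comm, Finset.union_comm]
        exact Finset.sdiff_union_inter Sk O
      have hdAS : setDist A Sk = setDist A C + setDist A E := by
        rw [← hSksplit, setDist_union_right' A hdisjCE]
      have f1 : (A.card:ℝ) * sumDisp C ≤ ((C.card:ℝ) - 1) * setDist A C := by
        have h := card_mul_sumDisp_le' C A
        rwa [setDist_comm' C A] at h
      have f2 : (C.card:ℝ) * sumDisp A ≤ ((A.card:ℝ) - 1) * setDist A C :=
        card_mul_sumDisp_le' A C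
      have f3' : (E.card:ℝ) * sumDisp A ≤ ((A.card:ℝ) - 1) * setDist A E :=
        card_mul_sumDisp_le' A E
      have hEc : (E.card : ℝ) = (k:ℝ) - (C.card:ℝ) := by
        have h := congrArg (Nat.cast : ℕ → ℝ) hEcard
        push_cast at h
        linarith
      have f3 : ((k:ℝ) - (C.card:ℝ)) * sumDisp A ≤ ((A.card:ℝ) - 1) * setDist A E := by
        rw [← hEc]; exact f3'
      have hdisp : (k:ℝ) * (A.card:ℝ) * (sumDisp A + setDist A C + sumDisp C) ≤
          (n:ℝ) * ((n:ℝ) - 1) * (setDist A C + setDist A E) :=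
        scalar_key (n:ℝ) (k:ℝ) (A.card:ℝ) (C.card:ℝ) (setDist A C) (setDist A E)
          (sumDisp A) (sumDisp C) hNR (Nat.cast_nonneg k)
          (by exact_mod_cast hk) (Nat.cast_nonneg _) (by exact_mod_cast hcSk)
          (by exact_mod_cast hacn) (by exact_mod_cast ha1)
          (setDist_nonneg' A C) (setDist_nonneg' A E) (sumDisp_nonneg' A) (sumDisp_nonneg' C)
          f1 f2 f3
      rw [← hvO, ← hdAS] at hdisp
      have hxnotin : ∀ x ∈ A, x ∉ Sk := by
        intro x hx
        rw [hA] at hx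
        exact (Finset.mem_sdiff.1 hx).2
      have hgsum : ∑ x ∈ A, (α * margGain φ x Sk)
          ≤ (A.card:ℝ) * margGain φ (xs ⟨k, hk⟩) Sk := by
        calc ∑ x ∈ A, (α * margGain φ x Sk)
            ≤ ∑ _x ∈ A, margGain φ (xs ⟨k, hk⟩) Sk :=
              Finset.sum_le_sum (fun x hx => hgreedy ⟨k, hk⟩ x (hxnotin x hx))
          _ = (A.card:ℝ) * margGain φ (xs ⟨k, hk⟩) Sk := by
              rw [Finset.sum_const, nsmul_eq_mul]
      have hsplitsum : ∑ x ∈ A, margGain φ x Sk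
          = (1/2) * (∑ x ∈ A, margGain s x Sk) + lam * setDist A Sk := by
        have h2 : setDist A Sk = ∑ x ∈ A, setDist {x} Sk := by
          unfold setDist
          exact Finset.sum_congr rfl fun x _ => (setDist_singleton' x Sk).symm
        rw [h2, Finset.mul_sum, Finset.mul_sum, ← Finset.sum_add_distrib]
        exact Finset.sum_congr rfl fun x hx => hmg x Sk (hxnotin x hx)
      have hdisjSA : Disjoint Sk A :=
        Finset.disjoint_right.2 (fun x hx => hxnotin x hx)
      have hsubsum : s O - s (partialSet xs n) ≤ ∑ x ∈ A, margGain s x Sk := by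
        have h3 := submod_sum s hs_submod Sk A hdisjSA
        have h4 : Sk ∪ A = Sk ∪ O := by
          rw [hA]; exact Finset.union_sdiff_self_eq_union
        have h5 : s O ≤ s (Sk ∪ A) := by
          rw [h4]; exact s_mono_subset s hs_mono Finset.subset_union_right
        have h6 : s Sk ≤ s (partialSet xs n) :=
          s_mono_subset s hs_mono (partialSet_mono xs hk.le)
        linarith
      have hsumnn : 0 ≤ ∑ x ∈ A, margGain s x Sk :=
        Finset.sum_nonneg fun x _ => hs_mono Sk x
      have hPle : P ≤ ∑ x ∈ A, margGain s x Sk := by rw [hPdef]; exact max_le hsumnn hsubsum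
      have hstep1 : α * ((1/2) * P + lam * setDist A Sk)
          ≤ (A.card:ℝ) * margGain φ (xs ⟨k, hk⟩) Sk := by
        have h7 : (1/2) * P + lam * setDist A Sk ≤ ∑ x ∈ A, margGain φ x Sk := by
          rw [hsplitsum]
          have h8 := mul_le_mul_of_nonneg_left hPle (by norm_num : (0:ℝ) ≤ 1/2)
          linarith
        have h9 := mul_le_mul_of_nonneg_left h7 hα0.le
        rw [Finset.mul_sum] at h9
        linarith [hgsum]
      have haN : (A.card:ℝ) ≤ (n:ℝ) := by
        have : A.card ≤ n := by omega
        exact_mod_cast this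
      have haPos : (0:ℝ) < (A.card:ℝ) := by exact_mod_cast ha1
      have hVgoal : (A.card:ℝ) * (α * (((n:ℝ) - 1) * P / 2) + α * lam * (k:ℝ) * sumDisp O)
          ≤ (A.card:ℝ) * ((n:ℝ) * ((n:ℝ) - 1) * margGain φ (xs ⟨k, hk⟩) Sk) := by
        have t1 := mul_le_mul_of_nonneg_left hstep1
          (by nlinarith : (0:ℝ) ≤ (n:ℝ) * ((n:ℝ) - 1))
        have t2 := mul_le_mul_of_nonneg_left hdisp (mul_nonneg hα0.le hlam.le)
        have t3 := mul_le_mul_of_nonneg_right haN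
          (mul_nonneg hα0.le (div_nonneg (mul_nonneg (by linarith : (0:ℝ) ≤ (n:ℝ) - 1) hP0)
            (by norm_num : (0:ℝ) ≤ 2)))
        nlinarith [t1, t2, t3]
      exact le_of_mul_le_mul_left hVgoal haPos
    -- telescoping
    have tele : ∀ m, m ≤ n →
        (m:ℝ) * (α * (((n:ℝ) - 1) * P / 2)) + α * lam * sumDisp O * ((m:ℝ) * ((m:ℝ) - 1) / 2)
          ≤ (n:ℝ) * ((n:ℝ) - 1) * (φ (partialSet xs m) - φ (partialSet xs 0)) := by
      intro m
      induction m with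
      | zero => intro _; norm_num
      | succ m' ih =>
        intro hm
        have hm' : m' < n := hm
        have hrec : φ (partialSet xs (m' + 1))
            = φ (partialSet xs m') + margGain φ (xs ⟨m', hm'⟩) (partialSet xs m') := by
          rw [partialSet_succ xs m' hm']
          unfold margGain
          ring
        have hstepm := step m' hm'
        have ihm := ih hm'.le
        rw [hrec]
        push_cast
        nlinarith [hstepm, ihm]
    have h0 : 0 ≤ φ (partialSet xs 0) := by
      rw [partialSet_zero]
      have h1 := hs_nonneg (∅ : Finset X)
      have h2 : φ ∅ = (1/2) * s ∅ + lam * sumDisp (∅ : Finset X) := by rw [hφ]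
      rw [h2, sumDisp_empty']
      linarith
    have htel := tele n le_rfl
    have hNN : (0:ℝ) < (n:ℝ) * ((n:ℝ) - 1) := by nlinarith
    have hKEY : α * P / 2 + α * lam * sumDisp O / 2 ≤ φ (partialSet xs n) := by
      have hmul : (n:ℝ) * ((n:ℝ) - 1) * (α * P / 2 + α * lam * sumDisp O / 2)
          ≤ (n:ℝ) * ((n:ℝ) - 1) * φ (partialSet xs n) := by
        have h0' : 0 ≤ (n:ℝ) * ((n:ℝ) - 1) * φ (partialSet xs 0) := mul_nonneg hNN.le h0
        have e : (n:ℝ) * ((n:ℝ) - 1) * (α * P / 2 + α * lam * sumDisp O / 2)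
            = (n:ℝ) * (α * (((n:ℝ) - 1) * P / 2))
              + α * lam * sumDisp O * ((n:ℝ) * ((n:ℝ) - 1) / 2) := by ring
        rw [e]
        linarith [htel, h0']
      exact le_of_mul_le_mul_left hmul hNN
    have hsSn : 0 ≤ s (partialSet xs n) := hs_nonneg _
    have hsO : 0 ≤ s O := hs_nonneg O
    have hvOn : 0 ≤ sumDisp O := sumDisp_nonneg' O
    have hφSn : φ (partialSet xs n)
        = (1/2) * s (partialSet xs n) + lam * sumDisp (partialSet xs n) := by rw [hφ]
    rw [hφSn] at hKEY
    rcases le_total (s O) (s (partialSet xs n)) with hc | hc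
    · have hPe : P = 0 := by rw [hPdef]; exact max_eq_left (by linarith)
      rw [hPe] at hKEY
      have h9 : α * s O ≤ s O := mul_le_of_le_one_left hsO hα1
      linarith [hKEY, h9, mul_nonneg hlam.le (sumDisp_nonneg' (partialSet xs n))]
    · have hPe : P = s O - s (partialSet xs n) := by rw [hPdef]; exact max_eq_right (by linarith)
      rw [hPe] at hKEY
      have h9 : α * s (partialSet xs n) ≤ s (partialSet xs n) :=
        mul_le_of_le_one_left hsSn hα1
      linarith [hKEY, h9]
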